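/- Let k be an algebraically closed field of characteristic 3 with a, b ∈ k. The surface defined by y^2 + x^3 + t0^2x^2 + t0t1^3x + t1^6 + a·t0^3t1^3 + b·t0^5t1 = 0 admits, for each B ∈ k with B^9 + aB^3 + bB = 0, the automorphism (x, y, t0, t1) ↦ (x + B^3t0^2, y, t0, t1 + Bt0), i.e., this substitution preserves the equation; when b ≠ 0 there are exactly 9 such B, forming a group isomorphic to (Z/3)^2 under addition. -/

import Mathlib

open MvPolynomial

/-- In characteristic 3, the surface
`y^2 + x^3 + t0^2x^2 + t0t1^3x + t1^6 + a t0^3t1^3 + b t0^5t1 = 0` (with `x = X 0`,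
`y = X 1`, `t0 = X 2`, `t1 = X 3`) admits, for each `B` with `B^9 + aB^3 + bB = 0`, the
automorphism `(x,y,t0,t1) ↦ (x + B^3 t0^2, y, t0, t1 + B t0)`; when `b ≠ 0` there are
exactly 9 such `B`, forming a group isomorphic to `(Z/3)^2` under addition. -/
theorem stmt_13 (k : Type*) [Field k] [IsAlgClosed k] [CharP k 3] (a b : k)
    (F : MvPolynomial (Fin 4) k)
    (hF : F = X 1 ^ 2 + X 0 ^ 3 + X 2 ^ 2 * X 0 ^ 2 + X 2 * X 3 ^ 3 * X 0
        + X 3 ^ 6 + C a * X 2 ^ 3 * X 3 ^ 3 + C b * X 2 ^ 5 * X 3) :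
    (∀ B : k, B ^ 9 + a * B ^ 3 + b * B = 0 →
      aeval ![X 0 + C (B ^ 3) * X 2 ^ 2, X 1, X 2, X 3 + C B * X 2] F = F) ∧
    (b ≠ 0 →
      Set.ncard {B : k | B ^ 9 + a * B ^ 3 + b * B = 0} = 9 ∧
      (0 : k) ∈ {B : k | B ^ 9 + a * B ^ 3 + b * B = 0} ∧
      (∀ B B' : k, B ^ 9 + a * B ^ 3 + b * B = 0 → B' ^ 9 + a * B' ^ 3 + b * B' = 0 →
        (B + B') ^ 9 + a * (B + B') ^ 3 + b * (B + B') = 0) ∧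
      (∀ B : k, B ^ 9 + a * B ^ 3 + b * B = 0 →
        (-B) ^ 9 + a * (-B) ^ 3 + b * (-B) = 0)) := by
  have h3k : (3 : k) = 0 := by exact_mod_cast CharP.cast_eq_zero k 3
  constructor
  · intro B hB
    have h3 : (3 : MvPolynomial (Fin 4) k) = 0 := by
      exact_mod_cast CharP.cast_eq_zero (MvPolynomial (Fin 4) k) 3
    have hC : (C B : MvPolynomial (Fin 4) k) ^ 9 + C a * C B ^ 3 + C b * C B = 0 := by
      have := congrArg (⇑(C : k →+* MvPolynomial (Fin 4) k)) hB
      simpa only [map_add, map_mul, map_pow, map_zero] using this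
    subst hF
    simp only [map_add, map_mul, map_pow, aeval_X, aeval_C, Matrix.cons_val_zero,
      Matrix.cons_val_one, Matrix.head_cons, Matrix.cons_val_two, Matrix.tail_cons,
      Matrix.cons_val_three, algebraMap_eq]
    linear_combination (X 2 : MvPolynomial (Fin 4) k) ^ 6 * hC +
      (2 * X 2 * X 3 ^ 5 * C B + 5 * X 2 ^ 2 * X 3 ^ 4 * C B ^ 2 +
        7 * X 2 ^ 3 * X 3 ^ 3 * C B ^ 3 + X 2 ^ 4 * X 3 ^ 2 * C B * C a +
        6 * X 2 ^ 4 * X 3 ^ 2 * C B ^ 4 + X 2 ^ 5 * X 3 * C B ^ 2 * C a +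
        3 * X 2 ^ 5 * X 3 * C B ^ 5 + X 2 ^ 6 * C B ^ 6 +
        X 0 * X 2 ^ 2 * X 3 ^ 2 * C B + X 0 * X 2 ^ 3 * X 3 * C B ^ 2 +
        X 0 * X 2 ^ 4 * C B ^ 3 + X 0 * X 2 ^ 4 * C B ^ 6 +
        X 0 ^ 2 * X 2 ^ 2 * C B ^ 3 : MvPolynomial (Fin 4) k) * h3
  · intro hb
    refine ⟨?_, by simp, ?_, ?_⟩
    · set p : Polynomial k := Polynomial.X ^ 9 + Polynomial.C a * Polynomial.X ^ 3 +
        Polynomial.C b * Polynomial.X with hp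
      have hsep : p.Separable := by
        rw [Polynomial.separable_def]
        have hder : Polynomial.derivative p = Polynomial.C b := by
          have h9k : (9 : k) = 0 := by linear_combination 3 * h3k
          simp [hp, Polynomial.derivative_X_pow]
          rw [← Polynomial.C_1, ← Polynomial.C_add, ← Polynomial.C_add,
            show (8 : k) + 1 = 0 by linear_combination h9k, show (2 : k) + 1 = 0 by linear_combination h3k]
          simp
        rw [hder]
        exact ⟨0, Polynomial.C b⁻¹, by
          simp [← Polynomial.C_mul, inv_mul_cancel₀ hb]⟩
      have hset : {B : k | B ^ 9 + a * B ^ 3 + b * B = 0} = p.rootSet k := by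
        have hpne : p ≠ 0 := by
          intro h
          have := congrArg (fun q => Polynomial.coeff q 9) h
          simp [hp, Polynomial.coeff_X_pow] at this
        ext B
        rw [Set.mem_setOf_eq, Polynomial.mem_rootSet]
        simp only [hpne, ne_eq, not_false_eq_true, true_and, hp, map_add, map_mul,
          map_pow, Polynomial.aeval_X, Polynomial.aeval_C, Algebra.algebraMap_self_apply]
        exact ⟨fun h => ⟨hpne, h⟩, fun h => h.2⟩
      rw [hset, Set.ncard_eq_toFinset_card', Set.toFinset_card]
      rw [Polynomial.card_rootSet_eq_natDegree hsep (by simpa using IsAlgClosed.splits p)]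
      rw [hp]
      compute_degree!
    · intro B B' hB hB'
      linear_combination hB + hB' +
        (3 * B ^ 8 * B' + 12 * B ^ 7 * B' ^ 2 + 28 * B ^ 6 * B' ^ 3 + 42 * B ^ 5 * B' ^ 4 +
          42 * B ^ 4 * B' ^ 5 + 28 * B ^ 3 * B' ^ 6 + 12 * B ^ 2 * B' ^ 7 + 3 * B * B' ^ 8 +
          a * B ^ 2 * B' + a * B * B' ^ 2) * h3k
    · intro B hB
      linear_combination -hB
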